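/- Let Q be a cube and W_Q the family of maximal dyadic subcubes R ⊂ Q such that 2^r ℓ(R) ≤ ℓ(Q) and dist(R, ∂Q) ≥ ℓ(R)^γ ℓ(Q)^{1-γ}. Then the dilated cubes {9R : R ∈ W_Q} have bounded overlap: ∑_{R ∈ W_Q} 1_{9R}(x) ≲ 1 for all x, with constant depending only on n, r, γ. -/

import Mathlib

open MeasureTheory
open scoped ENNReal

noncomputable section

/-- The (half-open) dyadic cube of sidelength `2^k` with corner `c * 2^k` in `ℝⁿ`. -/
def dyadicCube (n : ℕ) (k : ℤ) (c : Fin n → ℤ) : Set (Fin n → ℝ) :=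
  {x | ∀ i, (c i : ℝ) * 2 ^ k ≤ x i ∧ x i < ((c i : ℝ) + 1) * 2 ^ k}

/-- The concentric dilate `9R` of the dyadic cube indexed by `(k, c)`. -/
def dilatedCube (n : ℕ) (k : ℤ) (c : Fin n → ℤ) : Set (Fin n → ℝ) :=
  {x | ∀ i, |x i - ((c i : ℝ) + 1 / 2) * 2 ^ k| ≤ 9 / 2 * 2 ^ k}

/-- An axis-parallel cube with corner `a` and sidelength `L`. -/
def cornerCube (n : ℕ) (a : Fin n → ℝ) (L : ℝ) : Set (Fin n → ℝ) :=
  {x | ∀ i, a i ≤ x i ∧ x i < a i + L}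

/-- Distance between two sets. -/
def setDist {X : Type*} [PseudoMetricSpace X] (A B : Set X) : ℝ :=
  sInf (Set.image2 dist A B)

lemma wda_corner_mem (n : ℕ) (k : ℤ) (c : Fin n → ℤ) :
    (fun i => (c i : ℝ) * 2 ^ k) ∈ dyadicCube n k c := by
  intro i
  have h2 : (0:ℝ) < 2 ^ k := by positivity
  exact ⟨le_refl _, by simpa using mul_lt_mul_of_pos_right (lt_add_one ((c i : ℝ))) h2⟩


lemma wda_subset_parent (n : ℕ) (k : ℤ) (c : Fin n → ℤ) :
    dyadicCube n k c ⊆ dyadicCube n (k+1) (fun i => c i / 2) := by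
  intro p hp i
  have h2 : (0:ℝ) < 2 ^ k := by positivity
  have hk1 : (2:ℝ) ^ (k+1) = 2 ^ k * 2 := zpow_add_one₀ two_ne_zero k
  have hint : 2 * (c i / 2) ≤ c i ∧ c i ≤ 2 * (c i / 2) + 1 := by omega
  have hcast1 : ((2 * (c i / 2) : ℤ) : ℝ) ≤ (c i : ℝ) := by exact_mod_cast hint.1
  have hcast2 : (c i : ℝ) ≤ 2 * ((c i / 2 : ℤ) : ℝ) + 1 := by exact_mod_cast hint.2
  obtain ⟨hlo, hhi⟩ := hp i
  constructor
  · rw [hk1]; push_cast at hcast1 ⊢; nlinarith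
  · rw [hk1]; push_cast at hcast2 ⊢; nlinarith

lemma wda_parent_ssubset (n : ℕ) (k : ℤ) (c : Fin n → ℤ) (hn : 0 < n) :
    dyadicCube n k c ⊂ dyadicCube n (k+1) (fun i => c i / 2) := by
  classical
  rw [Set.ssubset_def]
  refine ⟨wda_subset_parent n k c, ?_⟩
  intro hcon
  set i0 : Fin n := ⟨0, hn⟩
  have h2 : (0:ℝ) < 2 ^ k := by positivity
  have hk1 : (2:ℝ) ^ (k+1) = 2 ^ k * 2 := zpow_add_one₀ two_ne_zero k
  set d0 : ℤ := c i0 / 2 with hd0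
  have hpar : c i0 = 2 * d0 ∨ c i0 = 2 * d0 + 1 := by omega
  have hbase := wda_corner_mem n k c
  rcases hpar with hp1 | hp1
  · -- sibling above
    set y : Fin n → ℝ := Function.update (fun i => (c i : ℝ) * 2 ^ k) i0 (((c i0 : ℝ) + 1) * 2 ^ k) with hy
    have hyp : y ∈ dyadicCube n (k+1) (fun i => c i / 2) := by
      intro i
      by_cases hi : i = i0
      · rw [hi]
        simp only [hy, Function.update_self]
        constructor
        · rw [hk1, ← hd0]
          have : (d0 : ℝ) * (2^k * 2) = (2*d0 : ℝ) * 2^k := by push_cast; ring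
          rw [this]
          have : ((2*d0 : ℤ) : ℝ) = (c i0 : ℝ) := by exact_mod_cast hp1.symm
          push_cast at this ⊢
          nlinarith
        · rw [hk1, ← hd0]
          have hc : (c i0 : ℝ) = 2 * (d0 : ℝ) := by exact_mod_cast hp1
          nlinarith
      · have := wda_subset_parent n k c hbase i
        simpa [hy, Function.update_of_ne hi] using this
    have hyn : y ∉ dyadicCube n k c := by
      intro hmem
      have := (hmem i0).2
      simp only [hy, Function.update_self] at this
      exact lt_irrefl _ this
    exact hyn (hcon hyp)
  · -- sibling below
    set y : Fin n → ℝ := Function.update (fun i => (c i : ℝ) * 2 ^ k) i0 (((c i0 : ℝ) - 1) * 2 ^ k) with hy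
    have hyp : y ∈ dyadicCube n (k+1) (fun i => c i / 2) := by
      intro i
      by_cases hi : i = i0
      · rw [hi]
        simp only [hy, Function.update_self]
        have hc : (c i0 : ℝ) = 2 * (d0 : ℝ) + 1 := by exact_mod_cast hp1
        constructor
        · rw [hk1, ← hd0]; nlinarith
        · rw [hk1, ← hd0]; nlinarith
      · have := wda_subset_parent n k c hbase i
        simpa [hy, Function.update_of_ne hi] using this
    have hyn : y ∉ dyadicCube n k c := by
      intro hmem
      have := (hmem i0).1
      simp only [hy, Function.update_self] at this
      nlinarith
    exact hyn (hcon hyp)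

/-- Frontier point of the corner cube between an inside point and an outside point. -/
lemma wda_frontier_between (n : ℕ) (a : Fin n → ℝ) (L : ℝ) (hL : 0 < L)
    (p y : Fin n → ℝ) (hp : p ∈ cornerCube n a L) (hy : y ∉ cornerCube n a L) :
    ∃ z ∈ frontier (cornerCube n a L), dist p z ≤ dist p y := by
  classical
  simp only [cornerCube, Set.mem_setOf_eq, not_forall] at hy
  obtain ⟨i, hi⟩ := hy
  have hpi := hp i
  have hkey : dist (p i) (y i) ≤ dist p y := dist_le_pi_dist p y i
  rw [Real.dist_eq] at hkey
  by_cases hlow : y i < a i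
  · -- z = update p i (a i)
    refine ⟨Function.update p i (a i), ?_, ?_⟩
    · rw [frontier_eq_closure_inter_closure]
      constructor
      · apply subset_closure
        intro j
        by_cases hj : j = i
        · subst hj; simp [Function.update_self]; exact hL
        · simp [Function.update_of_ne hj]; exact hp j
      · rw [Metric.mem_closure_iff]
        intro ε hε
        refine ⟨Function.update p i (a i - ε/2), ?_, ?_⟩
        · simp only [Set.mem_compl_iff, cornerCube, Set.mem_setOf_eq, not_forall]
          exact ⟨i, fun h => absurd h.1 (by simp [Function.update_self]; linarith)⟩
        · rw [dist_pi_lt_iff hε]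
          intro j
          by_cases hj : j = i
          · subst hj
            simp only [Function.update_self, Real.dist_eq]
            rw [show a j - (a j - ε/2) = ε/2 by ring, abs_of_pos (half_pos hε)]
            linarith
          · simp [Function.update_of_ne hj, hε]
    · rw [dist_pi_le_iff dist_nonneg]
      intro j
      by_cases hj : j = i
      · subst hj
        simp only [Function.update_self, Real.dist_eq]
        have : |p j - a j| = p j - a j := abs_of_nonneg (by linarith [hpi.1])
        rw [this]
        calc p j - a j ≤ p j - y j := by linarith
        _ ≤ |p j - y j| := le_abs_self _
        _ ≤ dist p y := hkey
      · simp [Function.update_of_ne hj, dist_nonneg]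
  · have hhigh : a i + L ≤ y i := by
      by_contra hc
      push_neg at hc
      exact hi ⟨not_lt.mp hlow, hc⟩
    refine ⟨Function.update p i (a i + L), ?_, ?_⟩
    · rw [frontier_eq_closure_inter_closure]
      constructor
      · rw [Metric.mem_closure_iff]
        intro ε hε
        set δ := min (ε/2) (L/2) with hδ
        have hδ0 : 0 < δ := lt_min (half_pos hε) (half_pos hL)
        refine ⟨Function.update p i (a i + L - δ), ?_, ?_⟩
        · intro j
          by_cases hj : j = i
          · subst hj
            simp only [Function.update_self]
            constructor
            · have : δ ≤ L/2 := min_le_right _ _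
              linarith
            · linarith
          · simp [Function.update_of_ne hj]; exact hp j
        · rw [dist_pi_lt_iff hε]
          intro j
          by_cases hj : j = i
          · subst hj
            simp only [Function.update_self, Real.dist_eq]
            have : δ ≤ ε/2 := min_le_left _ _
            rw [show a j + L - (a j + L - δ) = δ by ring, abs_of_pos hδ0]
            linarith
          · simp [Function.update_of_ne hj, hε]
      · apply subset_closure
        simp only [Set.mem_compl_iff, cornerCube, Set.mem_setOf_eq, not_forall]
        exact ⟨i, fun h => absurd h.2 (by simp [Function.update_self])⟩
    · rw [dist_pi_le_iff dist_nonneg]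
      intro j
      by_cases hj : j = i
      · subst hj
        simp only [Function.update_self, Real.dist_eq]
        have h1 : |p j - (a j + L)| = a j + L - p j := by
          rw [abs_of_nonpos (by linarith [hpi.2])]; ring
        rw [h1]
        calc a j + L - p j ≤ y j - p j := by linarith
        _ ≤ |p j - y j| := by rw [abs_sub_comm]; exact le_abs_self _
        _ ≤ dist p y := hkey
      · simp [Function.update_of_ne hj, dist_nonneg]

lemma wda_corner_frontier (n : ℕ) (a : Fin n → ℝ) (L : ℝ) (hL : 0 < L) (hn : 0 < n) :
    a ∈ frontier (cornerCube n a L) := by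
  classical
  set i0 : Fin n := ⟨0, hn⟩
  rw [frontier_eq_closure_inter_closure]
  constructor
  · apply subset_closure
    intro j; exact ⟨le_refl _, by linarith⟩
  · rw [Metric.mem_closure_iff]
    intro ε hε
    refine ⟨Function.update a i0 (a i0 - ε/2), ?_, ?_⟩
    · simp only [Set.mem_compl_iff, cornerCube, Set.mem_setOf_eq, not_forall]
      exact ⟨i0, fun h => absurd h.1 (by simp [Function.update_self]; linarith)⟩
    · rw [dist_pi_lt_iff hε]
      intro j
      by_cases hj : j = i0
      · rw [hj]
        simp only [Function.update_self, Real.dist_eq]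
        rw [show a i0 - (a i0 - ε/2) = ε/2 by ring, abs_of_pos (half_pos hε)]
        linarith
      · simp [Function.update_of_ne hj, hε]

lemma wda_two_rpow_half : ((4:ℝ)) ^ ((1:ℝ)/2) = 2 := by
  rw [show (4:ℝ) = 2^(2:ℕ) by norm_num, ← Real.rpow_natCast 2 2,
    ← Real.rpow_mul (by norm_num)]
  norm_num

lemma wda_hundred_rpow_half : ((100:ℝ)) ^ ((1:ℝ)/2) = 10 := by
  rw [show (100:ℝ) = 10^(2:ℕ) by norm_num, ← Real.rpow_natCast 10 2,
    ← Real.rpow_mul (by norm_num)]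
  norm_num

lemma wda_ell_le (γ : ℝ) (hγ1 : γ < 1) (ℓ L : ℝ) (hℓ : 0 < ℓ)
    (hle : ℓ ≤ L) : ℓ ≤ ℓ ^ γ * L ^ (1 - γ) := by
  have h1 : ℓ = ℓ ^ γ * ℓ ^ (1 - γ) := by
    rw [← Real.rpow_add hℓ]; norm_num
  calc ℓ = ℓ ^ γ * ℓ ^ (1-γ) := h1
  _ ≤ ℓ ^ γ * L ^ (1-γ) := by
      apply mul_le_mul_of_nonneg_left
        (Real.rpow_le_rpow hℓ.le hle (by linarith))
        (Real.rpow_nonneg hℓ.le _)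

lemma wda_case_b (γ ℓ L : ℝ) (hγ0 : 0 < γ) (hγ : γ < 1/2) (hℓ : 0 < ℓ) (hL : 0 < L)
    (h : ℓ ^ γ * L ^ (1 - γ) ≤ 2 * ℓ) : L ≤ 4 * ℓ := by
  have hγpos : (0:ℝ) < ℓ ^ γ := Real.rpow_pos_of_pos hℓ _
  have hAB : ℓ ^ γ * ℓ ^ (1-γ) = ℓ := by rw [← Real.rpow_add hℓ]; norm_num
  have h2 : L ^ (1-γ) ≤ 2 * ℓ ^ (1-γ) := by
    have h' : ℓ ^ γ * L ^ (1-γ) ≤ ℓ ^ γ * (2 * ℓ ^ (1-γ)) := by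
      rw [show ℓ ^ γ * (2 * ℓ ^ (1-γ)) = 2 * (ℓ ^ γ * ℓ ^ (1-γ)) by ring, hAB]
      exact h
    exact (mul_le_mul_iff_right₀ hγpos).mp h'
  by_contra hc
  push_neg at hc
  have h3 : (4*ℓ) ^ (1-γ) < L ^ (1-γ) :=
    Real.rpow_lt_rpow (by positivity) hc (by linarith)
  have h4 : (4*ℓ) ^ (1-γ) = 4 ^ (1-γ) * ℓ ^ (1-γ) :=
    Real.mul_rpow (by norm_num) hℓ.le
  have h5 : (2:ℝ) ≤ 4 ^ (1-γ) := by
    calc (2:ℝ) = 4 ^ ((1:ℝ)/2) := wda_two_rpow_half.symm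
    _ ≤ 4 ^ (1-γ) := Real.rpow_le_rpow_of_exponent_le (by norm_num) (by linarith)
  nlinarith [Real.rpow_pos_of_pos hℓ (1-γ)]

lemma wda_small (γ m L : ℝ) (hγ0 : 0 < γ) (hγ : γ < 1/2) (hm : 0 < m) (hL : 0 < L)
    (h : 100 * m ≤ L) : 10 * m ≤ m ^ γ * L ^ (1 - γ) := by
  have h1 : m ^ γ * m ^ (1 - γ) = m := by rw [← Real.rpow_add hm]; norm_num
  have h10 : (10:ℝ) ≤ 100 ^ (1-γ) := by
    calc (10:ℝ) = 100 ^ ((1:ℝ)/2) := wda_hundred_rpow_half.symm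
    _ ≤ 100 ^ (1-γ) := Real.rpow_le_rpow_of_exponent_le (by norm_num) (by linarith)
  have h2 : m ^ (1-γ) ≤ (L/100) ^ (1-γ) :=
    Real.rpow_le_rpow hm.le (by linarith) (by linarith)
  have h3 : (L/100) ^ (1-γ) = L ^ (1-γ) / 100 ^ (1-γ) :=
    Real.div_rpow hL.le (by norm_num) _
  have hLpow : (0:ℝ) ≤ L ^ (1-γ) := Real.rpow_nonneg hL.le _
  have h4 : 10 * m ^ (1-γ) ≤ L ^ (1-γ) := by
    have ha : m ^ (1-γ) ≤ L ^ (1-γ) / 100 ^ (1-γ) := h3 ▸ h2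
    have hb : L ^ (1-γ) / 100 ^ (1-γ) ≤ L ^ (1-γ) / 10 :=
      div_le_div_of_nonneg_left hLpow (by norm_num) h10
    linarith
  have h5 : m ^ γ * (10 * m ^ (1-γ)) = 10 * m := by
    rw [show m ^ γ * (10 * m ^ (1-γ)) = 10 * (m ^ γ * m ^ (1-γ)) from by ring, h1]
  calc 10 * m = m ^ γ * (10 * m ^ (1-γ)) := h5.symm
  _ ≤ m ^ γ * L ^ (1-γ) :=
      mul_le_mul_of_nonneg_left h4 (Real.rpow_nonneg hm.le _)

lemma wda_exp (γ : ℝ) (hγ0 : 0 < γ) (k k' : ℤ)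
    (h : ((2:ℝ)^k') ^ γ ≤ 18 * ((2:ℝ)^k) ^ γ) : ((k' : ℝ) - k) * γ ≤ 5 := by
  have e1 : ((2:ℝ)^k') ^ γ = (2:ℝ) ^ ((k':ℝ) * γ) := by
    rw [← Real.rpow_intCast 2 k', ← Real.rpow_mul (by norm_num)]
  have e2 : ((2:ℝ)^k) ^ γ = (2:ℝ) ^ ((k:ℝ) * γ) := by
    rw [← Real.rpow_intCast 2 k, ← Real.rpow_mul (by norm_num)]
  rw [e1, e2] at h
  have h32 : (2:ℝ) ^ (5:ℝ) = 32 := by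
    rw [show (5:ℝ) = ((5:ℕ):ℝ) by norm_num, Real.rpow_natCast]; norm_num
  have h18 : (18:ℝ) * (2:ℝ) ^ ((k:ℝ)*γ) ≤ (2:ℝ) ^ ((5:ℝ) + (k:ℝ)*γ) := by
    rw [Real.rpow_add (by norm_num), h32]
    nlinarith [Real.rpow_pos_of_pos (show (0:ℝ) < 2 by norm_num) ((k:ℝ)*γ)]
  have hle := le_trans h h18
  rw [Real.rpow_le_rpow_left_iff (by norm_num : (1:ℝ) < 2)] at hle
  nlinarith

set_option maxHeartbeats 1000000 in
/-- Bounded overlap of the dilated Whitney cubes: if `W_Q` consists of the maximal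
dyadic subcubes `R ⊆ Q` with `2^r ℓ(R) ≤ ℓ(Q)` and
`dist(R, ∂Q) ≥ ℓ(R)^γ ℓ(Q)^{1-γ}`, then `∑_{R ∈ W_Q} 1_{9R}(x) ≲ 1`, with constant
depending only on `n, r, γ`. -/
theorem whitney_dilates_bounded_overlap (n : ℕ) (r : ℕ) (γ : ℝ)
    (hr : 0 < r) (hγ0 : 0 < γ) (hγ : γ < 1 / 2) :
    ∃ C : ℝ, 0 < C ∧
    ∀ (a : Fin n → ℝ) (L : ℝ), 0 < L →
    ∀ (W : Set (ℤ × (Fin n → ℤ))),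
      (∀ q ∈ W, dyadicCube n q.1 q.2 ⊆ cornerCube n a L ∧
        (2 : ℝ) ^ r * (2 : ℝ) ^ q.1 ≤ L ∧
        setDist (dyadicCube n q.1 q.2) (frontier (cornerCube n a L)) ≥
          ((2 : ℝ) ^ q.1) ^ γ * L ^ (1 - γ)) →
      (∀ q ∈ W, ∀ (k' : ℤ) (c' : Fin n → ℤ),
        dyadicCube n q.1 q.2 ⊂ dyadicCube n k' c' →
        ¬ (dyadicCube n k' c' ⊆ cornerCube n a L ∧
          (2 : ℝ) ^ r * (2 : ℝ) ^ k' ≤ L ∧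
          setDist (dyadicCube n k' c') (frontier (cornerCube n a L)) ≥
            ((2 : ℝ) ^ k') ^ γ * L ^ (1 - γ))) →
      ∀ x : Fin n → ℝ,
        (∑' q : W, Set.indicator (dilatedCube n q.1.1 q.1.2)
          (fun _ => (1 : ℝ≥0∞)) x) ≤ ENNReal.ofReal C := by
  classical
  set D : ℕ := r + 1 + ⌈(5:ℝ)/γ⌉₊ with hD
  set M : ℕ := (2*D + 1) + 13 with hM
  set N : ℕ := M * 10 ^ n with hN
  have hNpos : 0 < N := by
    have : 0 < M := by omega
    positivity
  refine ⟨(N : ℝ), by exact_mod_cast hNpos, ?_⟩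
  intro a L hL W hW1 hW2 x
  -- reduce to showing the sum is at most N
  rw [show ((N:ℝ)) = ((N:ℕ):ℝ) from rfl, ENNReal.ofReal_natCast]
  rcases Nat.eq_zero_or_pos n with hn0 | hn
  · -- degenerate dimension 0 : W is empty
    subst hn0
    have hWempty : W = ∅ := by
      ext q
      simp only [Set.mem_empty_iff_false, iff_false]
      intro hq
      obtain ⟨-, -, h3⟩ := hW1 q hq
      have hQ : cornerCube 0 a L = Set.univ := by
        ext y; simp [cornerCube]
      rw [hQ, frontier_univ] at h3
      have h0 : setDist (dyadicCube 0 q.1 q.2) (∅ : Set (Fin 0 → ℝ)) = 0 := by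
        simp [setDist, Real.sInf_empty]
      rw [h0] at h3
      have hpos : 0 < ((2:ℝ)^q.1)^γ * L^(1-γ) := by positivity
      linarith
    subst hWempty
    simp only [tsum_empty]
    exact zero_le
  -- main case
  have hfr : a ∈ frontier (cornerCube n a L) := wda_corner_frontier n a L hL hn
  set S : Set (ℤ × (Fin n → ℤ)) := {q | q ∈ W ∧ x ∈ dilatedCube n q.1 q.2} with hSdef
  -- sidelength facts
  have h2r : (2:ℝ) ≤ 2^r := by
    calc (2:ℝ) = 2^1 := (pow_one 2).symm
    _ ≤ 2^r := pow_le_pow_right₀ (by norm_num) hr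
  have hsize : ∀ q ∈ W, 2 * (2:ℝ)^q.1 ≤ L := by
    intro q hq
    obtain ⟨-, h2, -⟩ := hW1 q hq
    have hp : (0:ℝ) < 2^q.1 := by positivity
    nlinarith
  have hsizeL : ∀ q ∈ W, (2:ℝ)^q.1 ≤ L := by
    intro q hq
    have := hsize q hq
    have hp : (0:ℝ) < 2^q.1 := by positivity
    linarith
  -- the set-distance lower bound, pointwise
  have hsetd : ∀ q ∈ W, ∀ p ∈ dyadicCube n q.1 q.2, ∀ z ∈ frontier (cornerCube n a L),
      ((2:ℝ)^q.1)^γ * L^(1-γ) ≤ dist p z := by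
    intro q hq p hp z hz
    obtain ⟨-, -, hd⟩ := hW1 q hq
    refine le_trans hd (csInf_le ?_ (Set.mem_image2_of_mem hp hz))
    exact ⟨0, fun d hd => by
      rcases hd with ⟨u, hu, v, hv, rfl⟩
      exact dist_nonneg⟩
  -- distance from x to frontier is bounded below for q ∈ S
  have hlow : ∀ q ∈ S, ∀ z ∈ frontier (cornerCube n a L),
      ((2:ℝ)^q.1)^γ * L^(1-γ) - 5 * 2^q.1 ≤ dist x z := by
    rintro q ⟨hqW, hqx⟩ z hz
    set p : Fin n → ℝ := fun i => (q.2 i : ℝ) * 2^q.1 with hp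
    have hpmem : p ∈ dyadicCube n q.1 q.2 := wda_corner_mem n q.1 q.2
    have hdist_pz := hsetd q hqW p hpmem z hz
    have h2p : (0:ℝ) < 2^q.1 := by positivity
    have hdist_xp : dist x p ≤ 5 * 2^q.1 := by
      rw [dist_pi_le_iff (by positivity)]
      intro i
      have hxi := hqx i
      rw [abs_le] at hxi
      have hexp : ((q.2 i:ℝ)+1/2)*2^q.1 = (q.2 i:ℝ)*2^q.1 + 1/2*2^q.1 := by ring
      rw [Real.dist_eq, abs_le]
      have hpi : p i = (q.2 i:ℝ)*2^q.1 := rfl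
      rw [hpi]
      exact ⟨by linarith [hxi.1], by linarith [hxi.2]⟩
    have htri := dist_triangle p x z
    have hcomm : dist p x = dist x p := dist_comm p x
    linarith
  -- maximality trichotomy
  have hmax : ∀ q ∈ S, L ≤ 2^(r+1) * (2:ℝ)^q.1 ∨
      ∃ z ∈ frontier (cornerCube n a L),
        dist x z ≤ 9 * (((2:ℝ)^q.1)^γ * L^(1-γ)) := by
    rintro ⟨k, c⟩ ⟨hqW, hqx⟩
    have hss := wda_parent_ssubset n k c hn
    have hnot := hW2 (k, c) hqW (k+1) (fun i => c i / 2) hss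
    have h2k : (0:ℝ) < 2^k := by positivity
    have hk1 : (2:ℝ)^(k+1) = 2^k * 2 := zpow_add_one₀ two_ne_zero k
    obtain ⟨hsubQ, hsz, hdq⟩ := hW1 (k, c) hqW
    rw [not_and_or, not_and_or] at hnot
    rcases hnot with h1 | h2 | h3
    · -- parent not inside Q
      left
      rw [Set.not_subset] at h1
      obtain ⟨y, hy_par, hy_nQ⟩ := h1
      set p : Fin n → ℝ := fun i => (c i : ℝ) * 2^k with hp
      have hpmem : p ∈ dyadicCube n k c := wda_corner_mem n k c
      have hpQ : p ∈ cornerCube n a L := hsubQ hpmem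
      have hp_par := wda_subset_parent n k c hpmem
      have hdist_py : dist p y ≤ 2^k * 2 := by
        rw [dist_pi_le_iff (by positivity)]
        intro i
        have h1i := hp_par i
        have h2i := hy_par i
        have hexp : (((c i / 2 : ℤ):ℝ)+1)*2^(k+1) = ((c i / 2 : ℤ):ℝ)*2^(k+1) + 2^(k+1) := by ring
        rw [Real.dist_eq, abs_le]
        rw [hk1] at h1i h2i hexp
        constructor <;> linarith [h1i.1, h1i.2, h2i.1, h2i.2]
      obtain ⟨z, hz, hpz⟩ := wda_frontier_between n a L hL p y hpQ hy_nQ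
      have hlb := hsetd (k, c) hqW p hpmem z hz
      have hcb : L ≤ 4 * 2^k := by
        apply wda_case_b γ (2^k) L hγ0 hγ h2k hL
        calc ((2:ℝ)^k)^γ * L^(1-γ) ≤ dist p z := hlb
        _ ≤ dist p y := hpz
        _ ≤ 2^k * 2 := hdist_py
        _ ≤ 2 * 2^k := by ring_nf; exact le_refl _
      have h4 : (4:ℝ) ≤ 2^(r+1) := by
        calc (4:ℝ) = 2^2 := by norm_num
        _ ≤ 2^(r+1) := pow_le_pow_right₀ (by norm_num) (by omega)
      nlinarith
    · -- parent too large
      left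
      push_neg at h2
      have he : (2:ℝ)^r * 2^(k+1) = 2^(r+1) * 2^k := by
        rw [hk1, pow_succ]; ring
      rw [he] at h2
      exact h2.le
    · -- parent too close to the boundary
      right
      push_neg at h3
      have hne : (Set.image2 dist (dyadicCube n (k+1) (fun i => c i / 2))
          (frontier (cornerCube n a L))).Nonempty :=
        Set.Nonempty.image2 ⟨_, wda_corner_mem n (k+1) (fun i => c i / 2)⟩ ⟨a, hfr⟩
      obtain ⟨d, hdmem, hdlt⟩ := exists_lt_of_csInf_lt hne h3
      rcases hdmem with ⟨p', hp', z, hz, rfl⟩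
      refine ⟨z, hz, ?_⟩
      -- dist x p' ≤ 13/2 * 2^k
      set cen : Fin n → ℝ := fun i => ((c i : ℝ) + 1/2) * 2^k with hcen
      have hcen_mem : cen ∈ dyadicCube n k c := by
        intro i
        have hgoal : (c i:ℝ)*2^k ≤ ((c i:ℝ)+1/2)*2^k ∧ ((c i:ℝ)+1/2)*2^k < ((c i:ℝ)+1)*2^k :=
          ⟨by nlinarith, by nlinarith⟩
        exact hgoal
      have hcen_par := wda_subset_parent n k c hcen_mem
      have hdist_xp' : dist x p' ≤ 13/2 * 2^k := by
        rw [dist_pi_le_iff (by positivity)]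
        intro i
        have hxi := hqx i
        have h1i := hcen_par i
        have h2i := hp' i
        have hexp : (((c i / 2 : ℤ):ℝ)+1)*2^(k+1) = ((c i / 2 : ℤ):ℝ)*2^(k+1) + 2^(k+1) := by ring
        rw [hk1] at h1i h2i hexp
        have htri := abs_sub_le (x i) (cen i) (p' i)
        have hceni : cen i = ((c i : ℝ) + 1/2) * 2^k := rfl
        rw [Real.dist_eq]
        rw [abs_le] at hxi
        have habs2 : |cen i - p' i| ≤ 2^k * 2 := by
          rw [abs_le, hceni]
          constructor <;> linarith [h1i.1, h1i.2, h2i.1, h2i.2]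
        have habs1 : |x i - cen i| ≤ 9/2 * 2^k := by rw [hceni, abs_le]; exact hxi
        linarith
      -- v' ≤ 2 * (2^k)^γ * L^(1-γ)
      have hv' : ((2:ℝ)^(k+1))^γ * L^(1-γ) ≤ 2 * (((2:ℝ)^k)^γ * L^(1-γ)) := by
        have hsplit : ((2:ℝ)^(k+1))^γ = ((2:ℝ)^k)^γ * 2^γ := by
          rw [hk1, Real.mul_rpow (le_of_lt h2k) (by norm_num)]
        have h2γ : (2:ℝ)^γ ≤ 2 := by
          calc (2:ℝ)^γ ≤ 2^(1:ℝ) := Real.rpow_le_rpow_of_exponent_le (by norm_num) (by linarith)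
          _ = 2 := Real.rpow_one 2
        rw [hsplit]
        have hLp : (0:ℝ) ≤ L^(1-γ) := Real.rpow_nonneg hL.le _
        have hkp : (0:ℝ) ≤ ((2:ℝ)^k)^γ := Real.rpow_nonneg (le_of_lt h2k) _
        have hint := mul_le_mul_of_nonneg_right
          (mul_le_mul_of_nonneg_left h2γ hkp) hLp
        nlinarith [hint]
      have hellle : (2:ℝ)^k ≤ ((2:ℝ)^k)^γ * L^(1-γ) :=
        wda_ell_le γ (by linarith) _ L h2k (hsizeL (k, c) hqW)
      have htri2 := dist_triangle x p' z
      have hcomm : dist p' z = dist p' z := rfl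
      nlinarith [dist_nonneg (x := x) (y := p')]
  -- scale comparison
  have hcomp : ∀ q ∈ S, ∀ q' ∈ S, q.1 ≤ q'.1 → 100 * (2:ℝ)^q'.1 ≤ L →
      q'.1 - q.1 ≤ (D:ℤ) := by
    intro q hq q' hq' hkk hsmall
    have hDge : (1:ℤ) ≤ (D:ℤ) := by
      have : 1 ≤ D := by omega
      exact_mod_cast this
    rcases hmax q hq with hbig | ⟨z, hz, hxz⟩
    · -- comparable scales
      obtain ⟨-, h2, -⟩ := hW1 q' hq'.1
      have h2rpos : (0:ℝ) < 2^r := by positivity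
      have hstep : (2:ℝ)^q'.1 ≤ 2^(q.1+1) := by
        have he : (2:ℝ)^(r+1) * 2^q.1 = 2^r * 2^(q.1+1) := by
          rw [zpow_add_one₀ two_ne_zero, pow_succ]; ring
        rw [he] at hbig
        have := le_trans h2 hbig
        exact le_of_mul_le_mul_left this h2rpos
      have := (zpow_le_zpow_iff_right₀ (by norm_num : (1:ℝ) < 2)).mp hstep
      omega
    · -- both small, use the distance bounds
      have hm : (0:ℝ) < 2^q'.1 := by positivity
      have hsmall2 := wda_small γ (2^q'.1) L hγ0 hγ hm hL hsmall
      have hlb := hlow q' hq' z hz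
      have hLp : (0:ℝ) < L^(1-γ) := Real.rpow_pos_of_pos hL _
      have hmono : ((2:ℝ)^q'.1)^γ ≤ 18 * ((2:ℝ)^q.1)^γ := by
        have hmul : ((2:ℝ)^q'.1)^γ * L^(1-γ) ≤ (18 * ((2:ℝ)^q.1)^γ) * L^(1-γ) := by
          have he : (18 * ((2:ℝ)^q.1)^γ) * L^(1-γ) = 18 * (((2:ℝ)^q.1)^γ * L^(1-γ)) := by ring
          rw [he]
          linarith
        exact le_of_mul_le_mul_right hmul hLp
      have hexp := wda_exp γ hγ0 q.1 q'.1 hmono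
      have hdiv : ((q'.1:ℝ) - q.1) ≤ 5/γ := by
        rw [le_div_iff₀ hγ0]
        exact hexp
      have hceil : (5:ℝ)/γ ≤ (⌈(5:ℝ)/γ⌉₊ : ℝ) := Nat.le_ceil _
      have hfin : ((q'.1:ℝ) - q.1) ≤ ((D:ℤ):ℝ) := by
        have : ((⌈(5:ℝ)/γ⌉₊ : ℕ):ℝ) ≤ ((D:ℤ):ℝ) := by
          have hle : ⌈(5:ℝ)/γ⌉₊ ≤ D := by omega
          push_cast
          exact_mod_cast hle
        linarith
      exact_mod_cast hfin
  -- per-scale boxes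
  set lo : ℤ → Fin n → ℤ := fun k i => ⌈x i / (2:ℝ)^k⌉ - 5 with hlo
  set box : ℤ → Finset (Fin n → ℤ) :=
    fun k => Fintype.piFinset (fun i => Finset.Icc (lo k i) (lo k i + 9)) with hbox_def
  have hbox : ∀ (k : ℤ) (c : Fin n → ℤ), x ∈ dilatedCube n k c → c ∈ box k := by
    intro k c hx9
    rw [hbox_def, Fintype.mem_piFinset]
    intro i
    rw [Finset.mem_Icc]
    have h2k : (0:ℝ) < 2^k := by positivity
    have hxi := hx9 i
    rw [abs_le] at hxi
    have hexp : ((c i:ℝ)+1/2)*2^k = (c i:ℝ)*2^k + 1/2*2^k := by ring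
    have hup : x i ≤ ((c i:ℝ)+5) * 2^k := by nlinarith [hxi.1]
    have hdn : ((c i:ℝ)-4) * 2^k ≤ x i := by nlinarith [hxi.2]
    constructor
    · -- lo ≤ c i
      have hceil : ⌈x i / (2:ℝ)^k⌉ ≤ c i + 5 := by
        rw [Int.ceil_le]
        rw [div_le_iff₀ h2k]
        push_cast
        linarith
      simp only [hlo]
      omega
    · -- c i ≤ lo + 9
      have hceil2 : (c i : ℤ) - 4 ≤ ⌈x i / (2:ℝ)^k⌉ := by
        have hle : ((c i : ℝ) - 4) ≤ x i / (2:ℝ)^k := by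
          rw [le_div_iff₀ h2k]
          linarith
        have := le_trans hle (Int.le_ceil _)
        exact_mod_cast (le_trans (show ((c i - 4 : ℤ):ℝ) ≤ ((c i:ℝ) - 4) by push_cast; linarith) this)
      simp only [hlo]
      omega
  have hboxcard : ∀ k, (box k).card = 10^n := by
    intro k
    rw [hbox_def]
    rw [Fintype.card_piFinset]
    have : ∀ i : Fin n, (Finset.Icc (lo k i) (lo k i + 9)).card = 10 := by
      intro i
      rw [Int.card_Icc]
      omega
    simp only [this, Finset.prod_const, Finset.card_univ, Fintype.card_fin]
  -- a finite set of scales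
  have hF : ∃ Fs : Finset ℤ, Fs.card ≤ M ∧ ∀ q ∈ S, q.1 ∈ Fs := by
    set Asm : Set (ℤ × (Fin n → ℤ)) := {q | q ∈ S ∧ 100 * (2:ℝ)^q.1 ≤ L} with hAsm
    set Bbg : Set (ℤ × (Fin n → ℤ)) := {q | q ∈ S ∧ ¬ (100 * (2:ℝ)^q.1 ≤ L)} with hBbg
    have hD0 : (0:ℤ) ≤ (D:ℤ) := by positivity
    have hmemA : ∀ q ∈ Asm, ∀ q' ∈ Asm, q'.1 - q.1 ≤ (D:ℤ) ∧ q.1 - q'.1 ≤ (D:ℤ) := by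
      intro q hq q' hq'
      rcases le_total q.1 q'.1 with h | h
      · have := hcomp q hq.1 q' hq'.1 h hq'.2
        omega
      · have := hcomp q' hq'.1 q hq.1 h hq.2
        omega
    -- big cubes have scales within 6 of each other
    have hmemB : ∀ q ∈ Bbg, ∀ q' ∈ Bbg, q.1 - q'.1 ≤ 6 := by
      intro q hq q' hq'
      have h1 : L < 100 * (2:ℝ)^q'.1 := by
        rcases hq' with ⟨hS', hnb⟩
        push_neg at hnb
        exact hnb
      have h2 : 2 * (2:ℝ)^q.1 ≤ L := hsize q hq.1.1
      have h3 : (2:ℝ)^q.1 < 2^(q'.1 + 6) := by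
        have he : (2:ℝ)^(q'.1+6) = 64 * 2^q'.1 := by
          rw [zpow_add₀ two_ne_zero]
          norm_num [mul_comm]
        rw [he]
        nlinarith
      have := (zpow_lt_zpow_iff_right₀ (by norm_num : (1:ℝ) < 2)).mp h3
      omega
    by_cases hA : Asm.Nonempty <;> by_cases hB : Bbg.Nonempty
    · obtain ⟨qa, hqa⟩ := hA
      obtain ⟨qb, hqb⟩ := hB
      refine ⟨Finset.Icc (qa.1 - D) (qa.1 + D) ∪ Finset.Icc (qb.1 - 6) (qb.1 + 6), ?_, ?_⟩
      · calc _ ≤ (Finset.Icc (qa.1 - (D:ℤ)) (qa.1 + D)).card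
            + (Finset.Icc (qb.1 - 6) (qb.1 + 6)).card := Finset.card_union_le _ _
        _ ≤ M := by
          rw [Int.card_Icc, Int.card_Icc]
          omega
      · intro q hq
        by_cases hqs : 100 * (2:ℝ)^q.1 ≤ L
        · have hqA : q ∈ Asm := ⟨hq, hqs⟩
          apply Finset.mem_union_left
          rw [Finset.mem_Icc]
          obtain ⟨h1, h2⟩ := hmemA qa hqa q hqA
          omega
        · have hqB : q ∈ Bbg := ⟨hq, hqs⟩
          apply Finset.mem_union_right
          rw [Finset.mem_Icc]
          have h1 := hmemB q hqB qb hqb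
          have h2 := hmemB qb hqb q hqB
          omega
    · obtain ⟨qa, hqa⟩ := hA
      refine ⟨Finset.Icc (qa.1 - D) (qa.1 + D), ?_, ?_⟩
      · rw [Int.card_Icc]; omega
      · intro q hq
        by_cases hqs : 100 * (2:ℝ)^q.1 ≤ L
        · have hqA : q ∈ Asm := ⟨hq, hqs⟩
          rw [Finset.mem_Icc]
          obtain ⟨h1, h2⟩ := hmemA qa hqa q hqA
          omega
        · exact absurd ⟨q, hq, hqs⟩ hB
    · obtain ⟨qb, hqb⟩ := hB
      refine ⟨Finset.Icc (qb.1 - 6) (qb.1 + 6), ?_, ?_⟩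
      · rw [Int.card_Icc]; omega
      · intro q hq
        by_cases hqs : 100 * (2:ℝ)^q.1 ≤ L
        · exact absurd ⟨q, hq, hqs⟩ hA
        · have hqB : q ∈ Bbg := ⟨hq, hqs⟩
          rw [Finset.mem_Icc]
          have h1 := hmemB q hqB qb hqb
          have h2 := hmemB qb hqb q hqB
          omega
    · refine ⟨∅, by simp, ?_⟩
      intro q hq
      by_cases hqs : 100 * (2:ℝ)^q.1 ≤ L
      · exact absurd ⟨q, hq, hqs⟩ hA
      · exact absurd ⟨q, hq, hqs⟩ hB
  obtain ⟨Fs, hFcard, hFmem⟩ := hF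
  -- the global finite superset
  set T : Finset (ℤ × (Fin n → ℤ)) :=
    Fs.biUnion (fun k => (box k).image (fun c => (k, c))) with hT
  have hTcard : T.card ≤ N := by
    calc T.card ≤ ∑ k ∈ Fs, ((box k).image (fun c => (k, c))).card :=
      Finset.card_biUnion_le
    _ ≤ ∑ k ∈ Fs, 10^n := by
        apply Finset.sum_le_sum
        intro k _
        calc ((box k).image (fun c => (k, c))).card ≤ (box k).card := Finset.card_image_le
        _ = 10^n := hboxcard k
    _ = Fs.card * 10^n := by rw [Finset.sum_const, smul_eq_mul]
    _ ≤ M * 10^n := Nat.mul_le_mul_right _ hFcard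
  have hST : ∀ q ∈ S, q ∈ T := by
    intro q hq
    rw [hT, Finset.mem_biUnion]
    exact ⟨q.1, hFmem q hq, Finset.mem_image.mpr ⟨q.2, hbox q.1 q.2 hq.2, rfl⟩⟩
  -- final chain
  have hchain : (∑' q : W, Set.indicator (dilatedCube n q.1.1 q.1.2)
      (fun _ => (1:ℝ≥0∞)) x) ≤ (T.card : ℝ≥0∞) := by
    have hle : ∀ q : W, Set.indicator (dilatedCube n q.1.1 q.1.2) (fun _ => (1:ℝ≥0∞)) x ≤
        Set.indicator (↑T : Set (ℤ × (Fin n → ℤ))) (fun _ => (1:ℝ≥0∞)) q.1 := by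
      intro q
      by_cases hx9 : x ∈ dilatedCube n q.1.1 q.1.2
      · rw [Set.indicator_of_mem hx9, Set.indicator_of_mem]
        have hqS : q.1 ∈ S := ⟨q.2, hx9⟩
        exact Finset.mem_coe.mpr (hST q.1 hqS)
      · rw [Set.indicator_of_notMem hx9]; exact zero_le
    calc (∑' q : W, Set.indicator (dilatedCube n q.1.1 q.1.2) (fun _ => (1:ℝ≥0∞)) x)
        ≤ ∑' q : W, Set.indicator (↑T : Set (ℤ × (Fin n → ℤ))) (fun _ => (1:ℝ≥0∞)) q.1 :=
      ENNReal.tsum_le_tsum hle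
    _ ≤ ∑' p : ℤ × (Fin n → ℤ), Set.indicator (↑T : Set (ℤ × (Fin n → ℤ)))
          (fun _ => (1:ℝ≥0∞)) p :=
      ENNReal.tsum_comp_le_tsum_of_injective Subtype.coe_injective _
    _ = ∑ p ∈ T, Set.indicator (↑T : Set (ℤ × (Fin n → ℤ))) (fun _ => (1:ℝ≥0∞)) p :=
      tsum_eq_sum (fun p hp => Set.indicator_of_notMem (by simpa using hp) _)
    _ = ∑ p ∈ T, 1 := Finset.sum_congr rfl (fun p hp => Set.indicator_of_mem (by simpa using hp) _)
    _ = T.card := by simp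
  exact le_trans hchain (by exact_mod_cast hTcard)
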